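/- arXiv:2512.05223 — 6 statements merged into one kernel-verified Lean document; each statement's English description precedes it below -/
import Mathlib

section
/- Let V be a finite vertex set, τ a finite color set, and consider vectors x : V × τ → ℝ. Let A be the linear map sending x to (∑_{i ∈ τ} x(v,i))_{v ∈ V}. Suppose s : V × τ → ℝ is the difference of characteristic vectors of two proper τ-colorings φ₁, φ₂ of a graph G on V, and suppose the graph G(s) with vertex set V(s) = {v : ∃ i, s(v,i) ≠ 0} and edge set E(s) = {uv ∈ E : ∃ i, s(u,i) + s(v,i) = 0 and s(u,i) ≠ 0} is disconnected with at least two nonempty components. Then s is not support-minimal: there exists a nonzero vector s' with supp(s') strictly contained in supp(s), A s' = 0, and s'(u,i) + s'(v,i) = 0 whenever s(u,i) + s(v,i) = 0 for uv ∈ E. -/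
/-- The difference graph `G(s)` of a vector `s` on vertex-color pairs: `u` and `v` are
adjacent if they are adjacent in `G` and for some color `i`, `s(u,i) + s(v,i) = 0` with
`s(u,i) ≠ 0`. -/
def diffGraph {V τ : Type*} (G : SimpleGraph V) (s : V × τ → ℝ) : SimpleGraph V where
  Adj u v := G.Adj u v ∧ ∃ i, s (u, i) + s (v, i) = 0 ∧ s (u, i) ≠ 0
  symm := ⟨by
    rintro u v ⟨ha, i, hsum, hne⟩
    exact ⟨ha.symm, i, by linarith, fun h => hne (by linarith)⟩⟩
  loopless := ⟨fun v hv => G.irrefl hv.1⟩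

/-- If the difference `s` of the characteristic vectors of two proper colorings has a
disconnected difference graph (at least two vertices of `V(s)` in different components),
then `s` is not support-minimal for the fractional coloring system. -/
theorem stmt3 {V τ : Type*} [Fintype τ] [DecidableEq τ] (G : SimpleGraph V)
    (φ₁ φ₂ : V → τ)
    (h₁ : ∀ u v, G.Adj u v → φ₁ u ≠ φ₁ v)
    (h₂ : ∀ u v, G.Adj u v → φ₂ u ≠ φ₂ v)
    (s : V × τ → ℝ)
    (hs : s = fun p => (if φ₂ p.1 = p.2 then (1 : ℝ) else 0) -
      (if φ₁ p.1 = p.2 then (1 : ℝ) else 0))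
    (hdisc : ∃ u w : V, (∃ i, s (u, i) ≠ 0) ∧ (∃ i, s (w, i) ≠ 0) ∧
      ¬ (diffGraph G s).Reachable u w) :
    ∃ s' : V × τ → ℝ, s' ≠ 0 ∧ {p | s' p ≠ 0} ⊂ {p | s p ≠ 0} ∧
      (∀ v, ∑ i, s' (v, i) = 0) ∧
      (∀ u v i, G.Adj u v → s (u, i) + s (v, i) = 0 → s' (u, i) + s' (v, i) = 0) := by
  classical
  obtain ⟨u, w, ⟨i₀, hu⟩, ⟨j₀, hw⟩, hnr⟩ := hdisc
  refine ⟨fun p => if (diffGraph G s).Reachable u p.1 then s p else 0, ?_, ?_, ?_, ?_⟩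
  · intro h0
    have := congrFun h0 (u, i₀)
    simp only [Pi.zero_apply, if_pos (SimpleGraph.Reachable.refl u)] at this
    exact hu this
  · constructor
    · intro p hp
      simp only [Set.mem_setOf_eq] at hp ⊢
      intro h; apply hp; split <;> simp [h]
    · intro hsub
      have hmem : (w, j₀) ∈ {p | s p ≠ 0} := hw
      have := hsub hmem
      simp only [Set.mem_setOf_eq, if_neg hnr] at this
      exact this rfl
  · intro v
    by_cases hr : (diffGraph G s).Reachable u v
    · simp only [if_pos hr]
      simp only [hs]
      rw [Finset.sum_sub_distrib]
      simp
    · simp [if_neg hr]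
  · intro a b i hab hsum
    by_cases ha : (diffGraph G s).Reachable u a <;>
      by_cases hb : (diffGraph G s).Reachable u b
    · simpa [if_pos ha, if_pos hb] using hsum
    · simp only [if_pos ha, if_neg hb, add_zero]
      by_contra hne
      exact hb (ha.trans ⟨SimpleGraph.Walk.cons (show (diffGraph G s).Adj a b from ⟨hab, i, hsum, hne⟩) SimpleGraph.Walk.nil⟩)
    · simp only [if_neg ha, if_pos hb, zero_add]
      by_contra hne
      exact ha (hb.trans ⟨SimpleGraph.Walk.cons (show (diffGraph G s).Adj b a from ⟨hab.symm, i, by linarith, hne⟩) SimpleGraph.Walk.nil⟩)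
    · simp [if_neg ha, if_neg hb]
end

section
/- Let G = (V,E) be a simple graph and B the matrix with rows indexed by nonempty subsets U ⊆ V, where row U is the characteristic vector of E(G[U]) (edges with both endpoints in U). A nonzero uniform-sign vector g : E → ℝ (all nonzero entries of the same sign) is a circuit of the system {x : Bx ≤ b} (i.e., Bg is support-minimal among {Bx : x ≠ 0}, up to scaling) if and only if g has exactly one nonzero entry. -/
/-- The row of the rank-inequality matrix indexed by `U ⊆ V`, applied to `g`:
`∑_{e ∈ E(G[U])} g(e)`. -/
def rowSum {V : Type*} [Fintype V] [DecidableEq V] (G : SimpleGraph V) [DecidableRel G.Adj]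
    (g : G.edgeSet → ℝ) (U : Finset V) : ℝ :=
  ∑ e : G.edgeSet, if ∀ v ∈ (e : Sym2 V), v ∈ U then g e else 0

/-- The support of `B g` for the rank-inequality matrix `B`: the nonempty sets `U` whose
rank row evaluates to a nonzero value on `g`. -/
def Bsupp {V : Type*} [Fintype V] [DecidableEq V] (G : SimpleGraph V) [DecidableRel G.Adj]
    (g : G.edgeSet → ℝ) : Set (Finset V) :=
  {U | U.Nonempty ∧ rowSum G g U ≠ 0}

/-- A circuit of the rank-inequality system: a nonzero vector `g` such that `B g` is
support-minimal over `{B x : x ≠ 0}`. -/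
def IsCircuit {V : Type*} [Fintype V] [DecidableEq V] (G : SimpleGraph V) [DecidableRel G.Adj]
    (g : G.edgeSet → ℝ) : Prop :=
  g ≠ 0 ∧ ∀ y : G.edgeSet → ℝ, y ≠ 0 → ¬ Bsupp G y ⊂ Bsupp G g

/-- The unit vector supported on the edge `e`. -/
def unitVec {V : Type*} [DecidableEq V] (G : SimpleGraph V) (e : G.edgeSet) :
    G.edgeSet → ℝ :=
  fun f => if f = e then 1 else 0

/-- The spanning subgraph of `G` with edge set `R`. -/
def edgeSub {V : Type*} (G : SimpleGraph V) (R : Set G.edgeSet) : SimpleGraph V where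
  Adj u v := u ≠ v ∧ ∃ e ∈ R, (e : Sym2 V) = s(u, v)
  symm := by
    constructor
    rintro u v ⟨huv, e, heR, he⟩
    exact ⟨huv.symm, e, heR, by rw [he, Sym2.eq_swap]⟩
  loopless := by constructor; rintro v ⟨hv, _⟩; exact hv rfl

section helpers
set_option linter.unusedSectionVars false
variable {V : Type*} [Fintype V] [DecidableEq V] (G : SimpleGraph V) [DecidableRel G.Adj]

lemma edge_rep (e : G.edgeSet) : ∃ u v, (e : Sym2 V) = s(u, v) ∧ G.Adj u v := by
  have : ∃ u v, (e : Sym2 V) = s(u, v) := by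
    induction (e : Sym2 V) using Sym2.ind with
    | _ x y => exact ⟨x, y, rfl⟩
  obtain ⟨u, v, h⟩ := this
  exact ⟨u, v, h, by rw [← SimpleGraph.mem_edgeSet, ← h]; exact e.2⟩

lemma eq_of_subset_pair {u v : V} (huv : G.Adj u v) (e : G.edgeSet)
    (h : ∀ w ∈ (e : Sym2 V), w ∈ ({u, v} : Finset V)) : (e : Sym2 V) = s(u, v) := by
  obtain ⟨a, b, hab, hadj⟩ := edge_rep G e
  have hne : a ≠ b := hadj.ne
  have ha : a = u ∨ a = v := by
    have := h a (by rw [hab]; simp)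
    simpa using this
  have hb : b = u ∨ b = v := by
    have := h b (by rw [hab]; simp)
    simpa using this
  rw [hab]
  rcases ha with rfl | rfl <;> rcases hb with rfl | rfl
  · exact absurd rfl hne
  · rfl
  · exact Sym2.eq_swap
  · exact absurd rfl hne

lemma rowSum_single {g : G.edgeSet → ℝ} (e : G.edgeSet)
    (h : ∀ f, f ≠ e → g f = 0) (U : Finset V) :
    rowSum G g U = if ∀ v ∈ (e : Sym2 V), v ∈ U then g e else 0 := by
  unfold rowSum
  exact Fintype.sum_eq_single e (fun f hf => by rw [h f hf]; simp)

lemma rowSum_ne_zero {g : G.edgeSet → ℝ}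
    (huni : (∀ e, 0 ≤ g e) ∨ (∀ e, g e ≤ 0))
    {f : G.edgeSet} (hf : g f ≠ 0) {U : Finset V}
    (hU : ∀ v ∈ (f : Sym2 V), v ∈ U) : rowSum G g U ≠ 0 := by
  intro h0
  unfold rowSum at h0
  rcases huni with hpos | hneg
  · have := (Finset.sum_eq_zero_iff_of_nonneg
      (fun e _ => by split; exacts [hpos e, le_rfl])).mp h0 f (Finset.mem_univ f)
    rw [if_pos hU] at this
    exact hf this
  · have := (Finset.sum_eq_zero_iff_of_nonpos
      (fun e _ => by split; exacts [hneg e, le_rfl])).mp h0 f (Finset.mem_univ f)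
    rw [if_pos hU] at this
    exact hf this

lemma pair_mem_Bsupp {g : G.edgeSet → ℝ}
    (huni : (∀ e, 0 ≤ g e) ∨ (∀ e, g e ≤ 0))
    {f : G.edgeSet} (hf : g f ≠ 0) {u v : V} (hfv : (f : Sym2 V) = s(u, v)) :
    ({u, v} : Finset V) ∈ Bsupp G g := by
  refine ⟨⟨u, by simp⟩, rowSum_ne_zero G huni hf ?_⟩
  intro w hw
  rw [hfv] at hw
  rcases Sym2.mem_iff.mp hw with rfl | rfl <;> simp

end helpers


/-- A nonzero uniform-sign vector is a circuit of the rank-inequality system if and only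
if it has exactly one nonzero entry (i.e. it is a scaled unit vector). -/
theorem stmt8 {V : Type*} [Fintype V] [DecidableEq V] (G : SimpleGraph V)
    [DecidableRel G.Adj] (g : G.edgeSet → ℝ) (hg : g ≠ 0)
    (huni : (∀ e, 0 ≤ g e) ∨ (∀ e, g e ≤ 0)) :
    IsCircuit G g ↔ ∃ e, ∀ f, g f ≠ 0 ↔ f = e := by
  constructor
  · rintro ⟨-, hmin⟩
    obtain ⟨e, he⟩ : ∃ e, g e ≠ 0 := by
      by_contra h; push_neg at h; exact hg (funext fun x => h x)
    refine ⟨e, fun f => ⟨?_, fun h => h ▸ he⟩⟩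
    by_contra hcon
    push_neg at hcon
    obtain ⟨hfne, hfe⟩ := hcon
    -- f ≠ e, g f ≠ 0; use y = unitVec e
    obtain ⟨a, b, hab, hadj⟩ := edge_rep G f
    have hy0 : unitVec G e ≠ 0 := by
      intro h
      have := congrFun h e
      simp [unitVec] at this
    refine hmin (unitVec G e) hy0 ⟨?_, ?_⟩
    · rintro U ⟨hU1, hU2⟩
      rw [rowSum_single G e (fun f' hf' => by simp [unitVec, hf']) U] at hU2
      by_cases hc : ∀ v ∈ (e : Sym2 V), v ∈ U
      · exact ⟨hU1, rowSum_ne_zero G huni he hc⟩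
      · rw [if_neg hc] at hU2; exact absurd rfl hU2
    · intro hsub
      have hmem : ({a, b} : Finset V) ∈ Bsupp G g := pair_mem_Bsupp G huni hfne hab
      have := hsub hmem
      obtain ⟨-, h2⟩ := this
      rw [rowSum_single G e (fun f' hf' => by simp [unitVec, hf'])] at h2
      by_cases hc : ∀ v ∈ (e : Sym2 V), v ∈ ({a, b} : Finset V)
      · have : (e : Sym2 V) = s(a, b) := eq_of_subset_pair G hadj e hc
        exact hfe (Subtype.ext (hab.trans this.symm))
      · rw [if_neg hc] at h2; exact h2 rfl
  · rintro ⟨e, he⟩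
    have hge : g e ≠ 0 := (he e).mpr rfl
    have hg0 : ∀ f, f ≠ e → g f = 0 := fun f hf => by
      by_contra h; exact hf ((he f).mp h)
    refine ⟨hg, fun y hy hsub => ?_⟩
    obtain ⟨f, hf⟩ : ∃ f, y f ≠ 0 := by
      by_contra h; push_neg at h; exact hy (funext fun x => h x)
    -- every nonzero coordinate of y equals e
    have key : ∀ f', y f' ≠ 0 → f' = e := by
      intro f' hf'
      obtain ⟨a, b, hab, hadj⟩ := edge_rep G f'
      have hUy : ({a, b} : Finset V) ∈ Bsupp G y := by
        refine ⟨⟨a, by simp⟩, ?_⟩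
        have : rowSum G y {a, b} = y f' := by
          unfold rowSum
          rw [Fintype.sum_eq_single f' (fun e' he' => ?_)]
          · rw [if_pos]
            intro w hw
            rw [hab] at hw
            rcases Sym2.mem_iff.mp hw with rfl | rfl <;> simp
          · rw [if_neg]
            intro hc
            exact he' (Subtype.ext ((eq_of_subset_pair G hadj e' hc).trans hab.symm))
        rw [this]; exact hf'
      have hUg := hsub.1 hUy
      obtain ⟨-, h2⟩ := hUg
      rw [rowSum_single G e hg0] at h2
      by_cases hc : ∀ v ∈ (e : Sym2 V), v ∈ ({a, b} : Finset V)
      · exact Subtype.ext (hab.trans (eq_of_subset_pair G hadj e hc).symm)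
      · rw [if_neg hc] at h2; exact absurd rfl h2
    have hfe : f = e := key f hf
    subst hfe
    -- now Bsupp y = Bsupp g
    apply hsub.2
    rintro U ⟨hU1, hU2⟩
    rw [rowSum_single G f hg0] at hU2
    by_cases hc : ∀ v ∈ (f : Sym2 V), v ∈ U
    · refine ⟨hU1, ?_⟩
      rw [rowSum_single G f (fun f' hf' => by by_contra h; exact hf' (key f' h)), if_pos hc]
      exact hf
    · rw [if_neg hc] at hU2; exact absurd rfl hU2
end

section
/- Let G = (V,E) be a simple graph with rank-inequality matrix B, and let g be a vector over E. If there exists a nonzero uniform-sign vector z with supp(z) ⊆ supp(g) such that y = g − z satisfies supp(y) ⊊ supp(g) and supp(By) ⊊ supp(Bg), then there exists a single edge f ∈ supp(g) lying in no balanced set with respect to g; consequently dropping f alone reduces the support with respect to B. -/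
/-- If a nonzero uniform-sign vector `z` supported inside `supp(g)` can be dropped from
`g` (creating a new zero entry) so that the result has strictly reduced support w.r.t.
the rank matrix `B`, then some single edge `f` of `supp(g)` lies in no balanced set, and
dropping `f` alone reduces the support. -/
theorem stmt11 {V : Type*} [Fintype V] [DecidableEq V] (G : SimpleGraph V)
    [DecidableRel G.Adj] (g z : G.edgeSet → ℝ) (hz : z ≠ 0)
    (huni : (∀ e, 0 ≤ z e) ∨ (∀ e, z e ≤ 0))
    (hsupp : ∀ e, z e ≠ 0 → g e ≠ 0)
    (hy1 : {e | (g - z) e ≠ 0} ⊂ {e | g e ≠ 0})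
    (hy2 : Bsupp G (g - z) ⊂ Bsupp G g) :
    ∃ f : G.edgeSet, g f ≠ 0 ∧
      (∀ U : Finset V, (∀ v ∈ (f : Sym2 V), v ∈ U) → rowSum G g U ≠ 0) ∧
      Bsupp G (fun e => if e = f then 0 else g e) ⊂ Bsupp G g := by
  classical
  obtain ⟨f, hf1, hf2⟩ := Set.exists_of_ssubset hy1
  simp only [Set.mem_setOf_eq, not_not] at hf1 hf2
  have hzf : z f = g f := by
    have h : g f - z f = 0 := hf2
    linarith
  have hzf0 : z f ≠ 0 := by rw [hzf]; exact hf1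
  obtain ⟨a, b, hab⟩ : ∃ a b, (f : Sym2 V) = s(a, b) := by
    induction (f : Sym2 V) using Sym2.ind with
    | _ x y => exact ⟨x, y, rfl⟩
  have hadj : G.Adj a b := by
    have := f.prop
    rw [hab, SimpleGraph.mem_edgeSet] at this
    exact this
  have hlin : ∀ U : Finset V, rowSum G (g - z) U = rowSum G g U - rowSum G z U := by
    intro U
    unfold rowSum
    rw [← Finset.sum_sub_distrib]
    apply Finset.sum_congr rfl
    intro e _
    by_cases h : ∀ v ∈ (e : Sym2 V), v ∈ U
    · rw [if_pos h, if_pos h, if_pos h]; rfl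
    · rw [if_neg h, if_neg h, if_neg h]; ring
  have hball : ∀ U : Finset V, (∀ v ∈ (f : Sym2 V), v ∈ U) → rowSum G g U ≠ 0 := by
    intro U hU hzero
    have hUne : U.Nonempty := ⟨a, hU a (by rw [hab]; exact Sym2.mem_mk_left a b)⟩
    have hzU : rowSum G z U ≠ 0 := by
      unfold rowSum
      rcases huni with hpos | hneg
      · have h : 0 < ∑ e : G.edgeSet, if ∀ v ∈ (e : Sym2 V), v ∈ U then z e else 0 := by
          apply Finset.sum_pos'
          · intro e _
            split
            · exact hpos e
            · exact le_rfl
          · refine ⟨f, Finset.mem_univ f, ?_⟩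
            rw [if_pos hU]
            exact lt_of_le_of_ne (hpos f) (Ne.symm hzf0)
        exact h.ne'
      · have h : 0 < ∑ e : G.edgeSet, -(if ∀ v ∈ (e : Sym2 V), v ∈ U then z e else 0) := by
          apply Finset.sum_pos'
          · intro e _
            split
            · linarith [hneg e]
            · simp
          · refine ⟨f, Finset.mem_univ f, ?_⟩
            rw [if_pos hU]
            have := hneg f
            have : z f < 0 := lt_of_le_of_ne (hneg f) hzf0
            linarith
        rw [Finset.sum_neg_distrib] at h
        intro hc
        rw [hc] at h
        simp at h
    have hmem : U ∈ Bsupp G (g - z) := by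
      refine ⟨hUne, ?_⟩
      rw [hlin U, hzero]
      simpa using hzU
    exact (hy2.subset hmem).2 hzero
  have key : ∀ (w : G.edgeSet → ℝ), rowSum G w {a, b} = w f := by
    intro w
    unfold rowSum
    rw [Finset.sum_eq_single f]
    · rw [if_pos]
      intro v hv
      rw [hab, Sym2.mem_iff] at hv
      rcases hv with h | h <;> simp [h]
    · intro e _ hef
      rw [if_neg]
      intro hcond
      apply hef
      obtain ⟨u, v, huv⟩ : ∃ u v, (e : Sym2 V) = s(u, v) := by
        induction (e : Sym2 V) using Sym2.ind with
        | _ x y => exact ⟨x, y, rfl⟩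
      have hadje : G.Adj u v := by
        have := e.prop
        rw [huv, SimpleGraph.mem_edgeSet] at this
        exact this
      have hu := hcond u (by rw [huv]; exact Sym2.mem_mk_left u v)
      have hv := hcond v (by rw [huv]; exact Sym2.mem_mk_right u v)
      simp only [Finset.mem_insert, Finset.mem_singleton] at hu hv
      apply Subtype.ext
      rw [huv, hab]
      rcases hu with rfl | rfl <;> rcases hv with rfl | rfl
      · exact absurd rfl hadje.ne
      · rfl
      · exact Sym2.eq_swap
      · exact absurd rfl hadje.ne
    · intro h; exact absurd (Finset.mem_univ f) h
  refine ⟨f, hf1, hball, ?_⟩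
  rw [Set.ssubset_def]
  constructor
  · intro U hU
    obtain ⟨hUne, hUrs⟩ := hU
    refine ⟨hUne, ?_⟩
    by_cases h : ∀ v ∈ (f : Sym2 V), v ∈ U
    · exact hball U h
    · have heq : rowSum G (fun e => if e = f then 0 else g e) U = rowSum G g U := by
        unfold rowSum
        apply Finset.sum_congr rfl
        intro e _
        by_cases he : e = f
        · subst he; rw [if_neg h, if_neg h]
        · simp [he]
      rw [← heq]
      exact hUrs
  · intro hsub
    have h1 : ({a, b} : Finset V) ∈ Bsupp G g := by
      refine ⟨⟨a, by simp⟩, ?_⟩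
      rw [key g]
      exact hf1
    have h2 := hsub h1
    apply h2.2
    rw [key (fun e => if e = f then 0 else g e)]
    simp
end

section
/- Let G = (V,E) be a simple graph and g a 0/±1 vector on E whose support forms a path in G on which edge signs strictly alternate (+1, −1, +1, ...), or an even cycle of length at least 4 with alternating signs. Then g is a circuit of the rank-inequality system (Rank): any nonzero vector y with supp(By) ⊊ supp(Bg) is impossible; equivalently, every nonzero y with By vanishing on all sets balanced w.r.t. g is a scalar multiple of g. -/
/-- The cyclic successor of an index. -/
def cyclicSucc {n : ℕ} (i : Fin n) : Fin n :=
  ⟨((i : ℕ) + 1) % n, Nat.mod_lt _ i.pos⟩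

section helpers
variable {V : Type*} [Fintype V] [DecidableEq V] (G : SimpleGraph V) [DecidableRel G.Adj]

lemma negpow (i : ℕ) : ((-1 : ℝ)) ^ i = if i % 2 = 0 then 1 else -1 := by
  rcases Nat.even_or_odd i with h | h
  · rw [h.neg_one_pow, if_pos (Nat.even_iff.mp h)]
  · rw [h.neg_one_pow, if_neg (by simp [Nat.odd_iff.mp h])]

lemma edge_repr {G : SimpleGraph V} (f : G.edgeSet) :
    ∃ u v, G.Adj u v ∧ (f : Sym2 V) = s(u, v) := by
  rcases f with ⟨q, hq⟩
  induction q using Sym2.ind with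
  | _ a b => exact ⟨a, b, hq, rfl⟩

lemma rowSum_pair (y : G.edgeSet → ℝ) (e : G.edgeSet) (u v : V)
    (he : (e : Sym2 V) = s(u, v)) :
    rowSum G y ({u, v} : Finset V) = y e := by
  classical
  have hadj : G.Adj u v := by rw [← SimpleGraph.mem_edgeSet, ← he]; exact e.2
  have key : ∀ f : G.edgeSet, (∀ w ∈ (f : Sym2 V), w ∈ ({u, v} : Finset V)) ↔ f = e := by
    intro f
    constructor
    · intro hf
      obtain ⟨a, b, hab, hrep⟩ := edge_repr f
      have ha : a ∈ ({u, v} : Finset V) := hf a (by rw [hrep]; exact Sym2.mem_mk_left a b)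
      have hb : b ∈ ({u, v} : Finset V) := hf b (by rw [hrep]; exact Sym2.mem_mk_right a b)
      simp only [Finset.mem_insert, Finset.mem_singleton] at ha hb
      apply Subtype.ext
      rw [hrep, he]
      rcases ha with rfl | rfl <;> rcases hb with rfl | rfl
      · exact absurd rfl hab.ne
      · rfl
      · exact Sym2.eq_swap
      · exact absurd rfl hab.ne
    · rintro rfl
      intro w hw
      rw [he, Sym2.mem_iff] at hw
      rcases hw with rfl | rfl <;> simp
  unfold rowSum
  calc (∑ f : G.edgeSet, if ∀ w ∈ (f : Sym2 V), w ∈ ({u, v} : Finset V) then y f else 0)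
      = ∑ f : G.edgeSet, if f = e then y f else 0 :=
        Finset.sum_congr rfl (fun f _ => if_congr (key f) rfl rfl)
    _ = y e := by simp

lemma rowSum_two (z gg : G.edgeSet → ℝ) (hsupp : ∀ f, gg f = 0 → z f = 0)
    (U : Finset V) (e1 e2 : G.edgeSet) (hne : e1 ≠ e2)
    (hin : ∀ f : G.edgeSet,
      ((∀ w ∈ (f : Sym2 V), w ∈ U) ∧ gg f ≠ 0) ↔ (f = e1 ∨ f = e2)) :
    rowSum G z U = z e1 + z e2 := by
  classical
  unfold rowSum
  rw [← Finset.sum_filter]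
  rw [← Finset.sum_subset (s₁ := ({e1, e2} : Finset G.edgeSet))]
  · exact Finset.sum_pair hne
  · intro x hx
    simp only [Finset.mem_insert, Finset.mem_singleton] at hx
    rcases hx with rfl | rfl
    · simp only [Finset.mem_filter, Finset.mem_univ, true_and]
      exact ((hin x).mpr (Or.inl rfl)).1
    · simp only [Finset.mem_filter, Finset.mem_univ, true_and]
      exact ((hin x).mpr (Or.inr rfl)).1
  · intro x hx hnx
    simp only [Finset.mem_filter, Finset.mem_univ, true_and] at hx
    simp only [Finset.mem_insert, Finset.mem_singleton] at hnx
    by_cases hg : gg x = 0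
    · exact hsupp x hg
    · exact absurd ((hin x).mp ⟨hx, hg⟩) hnx

lemma rowSum_smul (c : ℝ) (g : G.edgeSet → ℝ) (U : Finset V) :
    rowSum G (c • g) U = c * rowSum G g U := by
  unfold rowSum
  rw [Finset.mul_sum]
  exact Finset.sum_congr rfl fun f _ => by
    simp only [Pi.smul_apply, smul_eq_mul, mul_ite, mul_zero]

lemma Bsupp_smul (c : ℝ) (hc : c ≠ 0) (g : G.edgeSet → ℝ) :
    Bsupp G (c • g) = Bsupp G g := by
  ext U
  simp [Bsupp, rowSum_smul, mul_eq_zero, hc]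

lemma proportional {G : SimpleGraph V} [DecidableRel G.Adj] (g y : G.edgeSet → ℝ) {n : ℕ}
    (E : Fin n → G.edgeSet)
    (hg : ∀ i, g (E i) = (-1) ^ (i : ℕ))
    (hcover : ∀ f : G.edgeSet, g f ≠ 0 → ∃ i, f = E i)
    (hzero : ∀ f, g f = 0 → y f = 0)
    (hkey : ∀ i j : Fin n, (i : ℕ) % 2 ≠ (j : ℕ) % 2 → y (E i) + y (E j) = 0)
    (hmix : (∃ e, g e = 1) ∧ (∃ e, g e = -1)) :
    ∃ c : ℝ, y = c • g := by
  obtain ⟨⟨ep, hep⟩, ⟨em, hem⟩⟩ := hmix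
  obtain ⟨ip, hip⟩ := hcover ep (by rw [hep]; norm_num)
  obtain ⟨im, him⟩ := hcover em (by rw [hem]; norm_num)
  have hipp : (ip : ℕ) % 2 = 0 := by
    have h := hg ip
    rw [← hip, hep, negpow] at h
    split_ifs at h with h0
    · exact h0
    · norm_num at h
  have himm : (im : ℕ) % 2 = 1 := by
    have h := hg im
    rw [← him, hem, negpow] at h
    split_ifs at h with h0
    · norm_num at h
    · omega
  refine ⟨y (E ip), ?_⟩
  have hall : ∀ i : Fin n, y (E i) = y (E ip) * (-1) ^ (i : ℕ) := by
    intro i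
    rcases Nat.even_or_odd (i : ℕ) with h | h
    · have h1 := hkey i im (by rw [Nat.even_iff] at h; omega)
      have h2 := hkey ip im (by omega)
      rw [negpow, if_pos (Nat.even_iff.mp h)]
      linarith
    · have h1 := hkey i ip (by rw [Nat.odd_iff] at h; omega)
      rw [negpow, if_neg (by simp [Nat.odd_iff.mp h])]
      linarith
  funext f
  by_cases hf : g f = 0
  · simp [hzero f hf, hf]
  · obtain ⟨i, rfl⟩ := hcover f hf
    simp only [Pi.smul_apply, smul_eq_mul, hg i]
    exact hall i

end helpers

/-- A mixed-sign 0/±1 vector whose support is an alternating path, or an alternating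
even cycle of length at least 4, is a circuit of the rank-inequality system. -/
theorem stmt13 {V : Type*} [Fintype V] [DecidableEq V] (G : SimpleGraph V)
    [DecidableRel G.Adj] (g : G.edgeSet → ℝ)
    (hpm : ∀ e, g e = 0 ∨ g e = 1 ∨ g e = -1)
    (hmix : (∃ e, g e = 1) ∧ (∃ e, g e = -1))
    (hstruct :
      (∃ (m : ℕ) (vs : Fin (m + 1) → V), Function.Injective vs ∧
        (∀ i : Fin m, G.Adj (vs i.castSucc) (vs i.succ)) ∧
        (∀ e : G.edgeSet, g e ≠ 0 ↔
          ∃ i : Fin m, (e : Sym2 V) = s(vs i.castSucc, vs i.succ)) ∧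
        (∀ (e : G.edgeSet) (i : Fin m), (e : Sym2 V) = s(vs i.castSucc, vs i.succ) →
          g e = (-1) ^ (i : ℕ))) ∨
      (∃ (m : ℕ) (vs : Fin (2 * m) → V), 2 ≤ m ∧ Function.Injective vs ∧
        (∀ i : Fin (2 * m), G.Adj (vs i) (vs (cyclicSucc i))) ∧
        (∀ e : G.edgeSet, g e ≠ 0 ↔
          ∃ i : Fin (2 * m), (e : Sym2 V) = s(vs i, vs (cyclicSucc i))) ∧
        (∀ (e : G.edgeSet) (i : Fin (2 * m)), (e : Sym2 V) = s(vs i, vs (cyclicSucc i)) →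
          g e = (-1) ^ (i : ℕ)))) :
    IsCircuit G g := by
  classical
  constructor
  · obtain ⟨e, he⟩ := hmix.1
    intro h0
    rw [h0] at he
    simp at he
  intro y hy hss
  have hsub := hss.subset
  -- support of y is contained in support of g
  have hzero : ∀ f : G.edgeSet, g f = 0 → y f = 0 := by
    intro f hf
    by_contra hyf
    obtain ⟨u, v, hadj, hrep⟩ := edge_repr f
    have hmem : ({u, v} : Finset V) ∈ Bsupp G y :=
      ⟨⟨u, by simp⟩, by rw [rowSum_pair G y f u v hrep]; exact hyf⟩
    have := (hsub hmem).2
    rw [rowSum_pair G g f u v hrep] at this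
    exact this hf
  have hbal : ∀ U : Finset V, U.Nonempty → rowSum G g U = 0 → rowSum G y U = 0 := by
    intro U hU hgU
    by_contra h
    exact (hsub ⟨hU, h⟩).2 hgU
  rcases hstruct with ⟨m, vs, hinj, hadj, hsuppc, hsign⟩ | ⟨m, vs, hm, hinj, hadj, hsuppc, hsign⟩
  -- PATH CASE
  · set E : Fin m → G.edgeSet :=
      fun i => ⟨s(vs i.castSucc, vs i.succ), (hadj i)⟩ with hE
    have hEcoe : ∀ i, (E i : Sym2 V) = s(vs i.castSucc, vs i.succ) := fun i => rfl
    have hgE : ∀ i, g (E i) = (-1) ^ (i : ℕ) := fun i => hsign (E i) i (hEcoe i)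
    have hcov : ∀ f : G.edgeSet, g f ≠ 0 → ∃ i, f = E i := by
      intro f hf
      obtain ⟨i, hi⟩ := (hsuppc f).mp hf
      exact ⟨i, Subtype.ext hi⟩
    have hkeylt : ∀ i j : Fin m, (i : ℕ) < (j : ℕ) → (i : ℕ) % 2 ≠ (j : ℕ) % 2 →
        y (E i) + y (E j) = 0 := by
      intro i j hlt hpar
      set U : Finset V :=
        {vs i.castSucc, vs i.succ, vs j.castSucc, vs j.succ} with hU
      have hne : E i ≠ E j := by
        intro h
        have hgeq : ((-1 : ℝ)) ^ (i : ℕ) = (-1) ^ (j : ℕ) := by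
          rw [← hgE i, ← hgE j, h]
        rw [negpow, negpow] at hgeq
        split_ifs at hgeq <;> first | omega | norm_num at hgeq
      have hchar : ∀ f : G.edgeSet,
          ((∀ w ∈ (f : Sym2 V), w ∈ U) ∧ g f ≠ 0) ↔ (f = E i ∨ f = E j) := by
        intro f
        constructor
        · rintro ⟨hw, hf⟩
          obtain ⟨k, rfl⟩ := hcov f hf
          have h1 : vs k.castSucc ∈ U :=
            hw _ (by rw [hEcoe k]; exact Sym2.mem_mk_left _ _)
          have h2 : vs k.succ ∈ U :=
            hw _ (by rw [hEcoe k]; exact Sym2.mem_mk_right _ _)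
          simp only [hU, Finset.mem_insert, Finset.mem_singleton] at h1 h2
          have hk1 : (k : ℕ) = (i : ℕ) ∨ (k : ℕ) = (i : ℕ) + 1 ∨
              (k : ℕ) = (j : ℕ) ∨ (k : ℕ) = (j : ℕ) + 1 := by
            rcases h1 with h | h | h | h
            · exact Or.inl (by simpa using congrArg Fin.val (hinj h))
            · exact Or.inr (Or.inl (by simpa using congrArg Fin.val (hinj h)))
            · exact Or.inr (Or.inr (Or.inl (by simpa using congrArg Fin.val (hinj h))))
            · exact Or.inr (Or.inr (Or.inr (by simpa using congrArg Fin.val (hinj h))))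
          have hk2 : (k : ℕ) + 1 = (i : ℕ) ∨ (k : ℕ) + 1 = (i : ℕ) + 1 ∨
              (k : ℕ) + 1 = (j : ℕ) ∨ (k : ℕ) + 1 = (j : ℕ) + 1 := by
            rcases h2 with h | h | h | h
            · exact Or.inl (by simpa using congrArg Fin.val (hinj h))
            · exact Or.inr (Or.inl (by simpa using congrArg Fin.val (hinj h)))
            · exact Or.inr (Or.inr (Or.inl (by simpa using congrArg Fin.val (hinj h))))
            · exact Or.inr (Or.inr (Or.inr (by simpa using congrArg Fin.val (hinj h))))
          have : (k : ℕ) = (i : ℕ) ∨ (k : ℕ) = (j : ℕ) := by omega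
          rcases this with h | h
          · exact Or.inl (by rw [Fin.ext h])
          · exact Or.inr (by rw [Fin.ext h])
        · intro h
          have hgne : ∀ l : Fin m, g (E l) ≠ 0 := by
            intro l
            rw [hgE l, negpow]
            split_ifs <;> norm_num
          rcases h with rfl | rfl
          · refine ⟨?_, hgne i⟩
            intro w hw
            rw [hEcoe i, Sym2.mem_iff] at hw
            rcases hw with rfl | rfl <;> simp [hU]
          · refine ⟨?_, hgne j⟩
            intro w hw
            rw [hEcoe j, Sym2.mem_iff] at hw
            rcases hw with rfl | rfl <;> simp [hU]
      have hgU : rowSum G g U = 0 := by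
        rw [rowSum_two G g g (fun f h => h) U (E i) (E j) hne hchar, hgE, hgE,
          negpow, negpow]
        split_ifs <;> first | omega | norm_num
      have hyU := hbal U ⟨vs i.castSucc, by simp [hU]⟩ hgU
      rwa [rowSum_two G y g hzero U (E i) (E j) hne hchar] at hyU
    have hkey : ∀ i j : Fin m, (i : ℕ) % 2 ≠ (j : ℕ) % 2 → y (E i) + y (E j) = 0 := by
      intro i j hpar
      rcases Nat.lt_trichotomy (i : ℕ) (j : ℕ) with h | h | h
      · exact hkeylt i j h hpar
      · omega
      · rw [add_comm]; exact hkeylt j i h (Ne.symm hpar)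
    obtain ⟨c, hc⟩ := proportional g y E hgE hcov hzero hkey hmix
    have hc0 : c ≠ 0 := by
      rintro rfl
      rw [hc, zero_smul] at hy
      exact hy rfl
    exact hss.ne (by rw [hc, Bsupp_smul G c hc0])
  -- CYCLE CASE
  · set E : Fin (2 * m) → G.edgeSet :=
      fun i => ⟨s(vs i, vs (cyclicSucc i)), (hadj i)⟩ with hE
    have hEcoe : ∀ i, (E i : Sym2 V) = s(vs i, vs (cyclicSucc i)) := fun i => rfl
    have hgE : ∀ i, g (E i) = (-1) ^ (i : ℕ) := fun i => hsign (E i) i (hEcoe i)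
    have hcov : ∀ f : G.edgeSet, g f ≠ 0 → ∃ i, f = E i := by
      intro f hf
      obtain ⟨i, hi⟩ := (hsuppc f).mp hf
      exact ⟨i, Subtype.ext hi⟩
    have hcs : ∀ x : Fin (2 * m), ((cyclicSucc x : Fin (2 * m)) : ℕ) = ((x : ℕ) + 1) % (2 * m) :=
      fun _ => rfl
    have hmod : ∀ x : ℕ, x < 2 * m →
        (x + 1) % (2 * m) = x + 1 ∨ ((x + 1) % (2 * m) = 0 ∧ x + 1 = 2 * m) := by
      intro x hx
      rcases Nat.lt_or_ge (x + 1) (2 * m) with h | h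
      · exact Or.inl (Nat.mod_eq_of_lt h)
      · have hxe : x + 1 = 2 * m := by omega
        exact Or.inr ⟨by rw [hxe, Nat.mod_self], hxe⟩
    have hkey : ∀ i j : Fin (2 * m), (i : ℕ) % 2 ≠ (j : ℕ) % 2 →
        y (E i) + y (E j) = 0 := by
      intro i j hpar
      set U : Finset V := {vs i, vs (cyclicSucc i), vs j, vs (cyclicSucc j)} with hU
      have hne : E i ≠ E j := by
        intro h
        have hgeq : ((-1 : ℝ)) ^ (i : ℕ) = (-1) ^ (j : ℕ) := by
          rw [← hgE i, ← hgE j, h]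
        rw [negpow, negpow] at hgeq
        split_ifs at hgeq <;> first | omega | norm_num at hgeq
      have hchar : ∀ f : G.edgeSet,
          ((∀ w ∈ (f : Sym2 V), w ∈ U) ∧ g f ≠ 0) ↔ (f = E i ∨ f = E j) := by
        intro f
        constructor
        · rintro ⟨hw, hf⟩
          obtain ⟨k, rfl⟩ := hcov f hf
          have h1 : vs k ∈ U :=
            hw _ (by rw [hEcoe k]; exact Sym2.mem_mk_left _ _)
          have h2 : vs (cyclicSucc k) ∈ U :=
            hw _ (by rw [hEcoe k]; exact Sym2.mem_mk_right _ _)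
          simp only [hU, Finset.mem_insert, Finset.mem_singleton] at h1 h2
          have hk1 : (k : ℕ) = (i : ℕ) ∨ (k : ℕ) = ((i : ℕ) + 1) % (2 * m) ∨
              (k : ℕ) = (j : ℕ) ∨ (k : ℕ) = ((j : ℕ) + 1) % (2 * m) := by
            rcases h1 with h | h | h | h
            · exact Or.inl (by simpa using congrArg Fin.val (hinj h))
            · exact Or.inr (Or.inl (by simpa [hcs] using congrArg Fin.val (hinj h)))
            · exact Or.inr (Or.inr (Or.inl (by simpa using congrArg Fin.val (hinj h))))
            · exact Or.inr (Or.inr (Or.inr (by simpa [hcs] using congrArg Fin.val (hinj h))))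
          have hk2 : ((k : ℕ) + 1) % (2 * m) = (i : ℕ) ∨
              ((k : ℕ) + 1) % (2 * m) = ((i : ℕ) + 1) % (2 * m) ∨
              ((k : ℕ) + 1) % (2 * m) = (j : ℕ) ∨
              ((k : ℕ) + 1) % (2 * m) = ((j : ℕ) + 1) % (2 * m) := by
            rcases h2 with h | h | h | h
            · exact Or.inl (by simpa [hcs] using congrArg Fin.val (hinj h))
            · exact Or.inr (Or.inl (by simpa [hcs] using congrArg Fin.val (hinj h)))
            · exact Or.inr (Or.inr (Or.inl (by simpa [hcs] using congrArg Fin.val (hinj h))))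
            · exact Or.inr (Or.inr (Or.inr (by simpa [hcs] using congrArg Fin.val (hinj h))))
          have hi' := hmod (i : ℕ) i.isLt
          have hj' := hmod (j : ℕ) j.isLt
          have hk' := hmod (k : ℕ) k.isLt
          have hkij : (k : ℕ) = (i : ℕ) ∨ (k : ℕ) = (j : ℕ) := by
            have hik := i.isLt
            have hjk := j.isLt
            have hkk := k.isLt
            rcases hi' with hi'' | ⟨hi'', hi3⟩ <;>
              rcases hj' with hj'' | ⟨hj'', hj3⟩ <;>
              rcases hk' with hk'' | ⟨hk'', hk3⟩ <;>
              rw [hi'', hj''] at hk1 hk2 <;> rw [hk''] at hk2 <;> omega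
          rcases hkij with h | h
          · exact Or.inl (by rw [Fin.ext h])
          · exact Or.inr (by rw [Fin.ext h])
        · intro h
          have hgne : ∀ l : Fin (2 * m), g (E l) ≠ 0 := by
            intro l
            rw [hgE l, negpow]
            split_ifs <;> norm_num
          rcases h with rfl | rfl
          · refine ⟨?_, hgne i⟩
            intro w hw
            rw [hEcoe i, Sym2.mem_iff] at hw
            rcases hw with rfl | rfl <;> simp [hU]
          · refine ⟨?_, hgne j⟩
            intro w hw
            rw [hEcoe j, Sym2.mem_iff] at hw
            rcases hw with rfl | rfl <;> simp [hU]
      have hgU : rowSum G g U = 0 := by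
        rw [rowSum_two G g g (fun f h => h) U (E i) (E j) hne hchar, hgE, hgE,
          negpow, negpow]
        split_ifs <;> first | omega | norm_num
      have hyU := hbal U ⟨vs i, by simp [hU]⟩ hgU
      rwa [rowSum_two G y g hzero U (E i) (E j) hne hchar] at hyU
    obtain ⟨c, hc⟩ := proportional g y E hgE hcov hzero hkey hmix
    have hc0 : c ≠ 0 := by
      rintro rfl
      rw [hc, zero_smul] at hy
      exact hy rfl
    exact hss.ne (by rw [hc, Bsupp_smul G c hc0])
end

section
/- Let G = (V,E) be a simple graph and g a 0/±1 vector whose support is an odd cycle of length at least 5 in G with exactly one vertex (the root) incident to two edges of the same sign, signs alternating elsewhere. Then g is a circuit of the rank-inequality system (Rank): every nonzero y satisfying y(e) + y(f) = 0 for every balanced pair (e,f) of g, and supported inside supp(g), is a scalar multiple of g. -/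
/-- A balanced pair of edges `(e, f)` with respect to `g`: a pair of distinct edges for
which some set `U` is balanced with respect to `g` and the edges of `G[U]` in the
support of `g` are exactly `e` and `f`. -/
def BalancedPair {V : Type*} [Fintype V] [DecidableEq V] (G : SimpleGraph V)
    [DecidableRel G.Adj] (g : G.edgeSet → ℝ) (e f : G.edgeSet) : Prop :=
  e ≠ f ∧ ∃ U : Finset V, rowSum G g U = 0 ∧
    ∀ h : G.edgeSet, (g h ≠ 0 ∧ ∀ v ∈ (h : Sym2 V), v ∈ U) ↔ (h = e ∨ h = f)

/-- Arithmetic helper: on a cycle of length `n ≥ 5`, if both endpoints of the edge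
`{b, b+1}` lie in `{a, a+1, a+2}` (indices mod `n`, with `a + 2 ≤ n`), then
`b = a` or `b = a + 1`. -/
lemma key (n a b : ℕ) (hn : 5 ≤ n) (ha : a + 2 ≤ n) (hb : b < n)
    (h1 : b = a ∨ b = a + 1 ∨ b = (a + 2) % n)
    (h2 : (b + 1) % n = a ∨ (b + 1) % n = a + 1 ∨ (b + 1) % n = (a + 2) % n) :
    b = a ∨ b = a + 1 := by
  rcases Nat.lt_or_ge (a + 2) n with h | h
  · rw [Nat.mod_eq_of_lt h] at h1 h2
    rcases h1 with h1 | h1 | h1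
    · exact Or.inl h1
    · exact Or.inr h1
    · exfalso
      subst h1
      rcases Nat.lt_or_ge (a + 2 + 1) n with h3 | h3
      · rw [Nat.mod_eq_of_lt h3] at h2; omega
      · have h4 : a + 2 + 1 = n := by omega
        rw [h4, Nat.mod_self] at h2; omega
  · have h' : a + 2 = n := by omega
    have e2 : (a + 2) % n = 0 := by rw [h', Nat.mod_self]
    rw [e2] at h1 h2
    rcases h1 with h1 | h1 | h1
    · exact Or.inl h1
    · exact Or.inr h1
    · exfalso
      subst h1
      rw [Nat.mod_eq_of_lt (show 0 + 1 < n by omega)] at h2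
      omega

/-- A 0/±1 vector whose support is a rooted alternating odd cycle of length at least 5
is a circuit of the rank-inequality system: any nonzero vector supported inside
`supp(g)` and vanishing on all balanced pairs of `g` is a scalar multiple of `g`. -/
theorem stmt14 {V : Type*} [Fintype V] [DecidableEq V] (G : SimpleGraph V)
    [DecidableRel G.Adj] (g : G.edgeSet → ℝ)
    (m : ℕ) (hm : 2 ≤ m) (vs : Fin (2 * m + 1) → V) (hinj : Function.Injective vs)
    (hadj : ∀ i : Fin (2 * m + 1), G.Adj (vs i) (vs (cyclicSucc i)))
    (hsupp : ∀ e : G.edgeSet, g e ≠ 0 ↔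
      ∃ i : Fin (2 * m + 1), (e : Sym2 V) = s(vs i, vs (cyclicSucc i)))
    (hsign : ∀ (e : G.edgeSet) (i : Fin (2 * m + 1)),
      (e : Sym2 V) = s(vs i, vs (cyclicSucc i)) → g e = (-1) ^ (i : ℕ)) :
    ∀ y : G.edgeSet → ℝ, y ≠ 0 → (∀ e, g e = 0 → y e = 0) →
      (∀ e f : G.edgeSet, BalancedPair G g e f → y e + y f = 0) →
      ∃ c : ℝ, y = c • g := by
  intro y _hy0 hysupp hpair
  have hn5 : 5 ≤ 2 * m + 1 := by omega
  -- the cycle edges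
  have hE : ∀ i : Fin (2 * m + 1), (s(vs i, vs (cyclicSucc i)) : Sym2 V) ∈ G.edgeSet :=
    fun i => G.mem_edgeSet.mpr (hadj i)
  set E : Fin (2 * m + 1) → G.edgeSet := fun i => ⟨s(vs i, vs (cyclicSucc i)), hE i⟩
    with hEdef
  have hgE : ∀ i : Fin (2 * m + 1), g (E i) = (-1) ^ (i : ℕ) := fun i => hsign (E i) i rfl
  have hsuccval : ∀ j : Fin (2 * m + 1),
      ((cyclicSucc j : Fin (2 * m + 1)) : ℕ) = ((j : ℕ) + 1) % (2 * m + 1) := fun _ => rfl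
  -- balanced pairs along the cycle (except at the root)
  have bal : ∀ i : Fin (2 * m + 1), (i : ℕ) + 1 < 2 * m + 1 →
      BalancedPair G g (E i) (E (cyclicSucc i)) := by
    intro i hi
    have hi'v : ((cyclicSucc i : Fin (2 * m + 1)) : ℕ) = (i : ℕ) + 1 := Nat.mod_eq_of_lt hi
    set i' : Fin (2 * m + 1) := cyclicSucc i with hi'def
    set i'' : Fin (2 * m + 1) := cyclicSucc i' with hi''def
    have hi''v : (i'' : ℕ) = ((i : ℕ) + 2) % (2 * m + 1) := by
      rw [hi''def, hsuccval, hi'v]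
    set U : Finset V := {vs i, vs i', vs i''} with hUdef
    have hmemU : ∀ j : Fin (2 * m + 1), vs j ∈ U ↔ (j = i ∨ j = i' ∨ j = i'') := by
      intro j
      simp only [hUdef, Finset.mem_insert, Finset.mem_singleton, hinj.eq_iff]
    have hedgeU : ∀ j : Fin (2 * m + 1),
        (∀ v ∈ (E j : Sym2 V), v ∈ U) ↔ (j = i ∨ j = i') := by
      intro j
      constructor
      · intro hv
        have h1 : vs j ∈ U := hv _ (Sym2.mem_mk_left _ _)
        have h2 : vs (cyclicSucc j) ∈ U := hv _ (Sym2.mem_mk_right _ _)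
        rw [hmemU] at h1 h2
        have h1' : (j : ℕ) = (i : ℕ) ∨ (j : ℕ) = (i : ℕ) + 1 ∨
            (j : ℕ) = ((i : ℕ) + 2) % (2 * m + 1) := by
          rcases h1 with h | h | h
          · exact Or.inl (by rw [h])
          · exact Or.inr (Or.inl (by rw [h, hi'v]))
          · exact Or.inr (Or.inr (by rw [h, hi''v]))
        have h2' : ((j : ℕ) + 1) % (2 * m + 1) = (i : ℕ) ∨
            ((j : ℕ) + 1) % (2 * m + 1) = (i : ℕ) + 1 ∨
            ((j : ℕ) + 1) % (2 * m + 1) = ((i : ℕ) + 2) % (2 * m + 1) := by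
          rcases h2 with h | h | h
          · exact Or.inl (by rw [← hsuccval, h])
          · exact Or.inr (Or.inl (by rw [← hsuccval, h, hi'v]))
          · exact Or.inr (Or.inr (by rw [← hsuccval, h, hi''v]))
        rcases key (2 * m + 1) (i : ℕ) (j : ℕ) hn5 (by omega) j.isLt h1' h2' with h | h
        · exact Or.inl (Fin.ext h)
        · exact Or.inr (Fin.ext (by rw [h, hi'v]))
      · intro hj v hv
        rcases hj with rfl | rfl
        · rw [Sym2.mem_iff] at hv
          rcases hv with rfl | rfl
          · exact (hmemU j).mpr (Or.inl rfl)
          · exact (hmemU (cyclicSucc j)).mpr (Or.inr (Or.inl rfl))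
        · rw [Sym2.mem_iff] at hv
          rcases hv with rfl | rfl
          · exact (hmemU i').mpr (Or.inr (Or.inl rfl))
          · exact (hmemU (cyclicSucc i')).mpr (Or.inr (Or.inr rfl))
    have hine : i ≠ i' := by
      intro h
      have h3 := hi'v
      rw [← h] at h3
      omega
    have hEne : E i ≠ E i' := by
      intro h
      have h1 : (s(vs i, vs i') : Sym2 V) = s(vs i', vs i'') := congrArg Subtype.val h
      rw [Sym2.eq_iff] at h1
      rcases h1 with ⟨h1, _⟩ | ⟨h1, _⟩
      · exact hine (hinj h1)
      · have h2 : i = i'' := hinj h1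
        have h3 := hi''v
        rw [← h2] at h3
        rcases Nat.lt_or_ge ((i : ℕ) + 2) (2 * m + 1) with h4 | h4
        · rw [Nat.mod_eq_of_lt h4] at h3; omega
        · have h5 : (i : ℕ) + 2 = 2 * m + 1 := by omega
          rw [h5, Nat.mod_self] at h3
          omega
    refine ⟨hEne, U, ?_, ?_⟩
    · -- rowSum is zero
      have hvanish : ∀ x ∈ (Finset.univ : Finset G.edgeSet),
          x ∉ ({E i, E i'} : Finset G.edgeSet) →
          (if ∀ v ∈ (x : Sym2 V), v ∈ U then g x else 0) = 0 := by
        intro x _ hx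
        simp only [Finset.mem_insert, Finset.mem_singleton, not_or] at hx
        by_cases hgx : g x = 0
        · simp [hgx]
        · rw [if_neg]
          intro hall
          obtain ⟨j, hj⟩ := (hsupp x).mp hgx
          have hxE : x = E j := Subtype.ext hj
          rcases (hedgeU j).mp (hxE ▸ hall) with rfl | rfl
          · exact hx.1 hxE
          · exact hx.2 hxE
      have hsum : rowSum G g U =
          ∑ x ∈ ({E i, E i'} : Finset G.edgeSet),
            (if ∀ v ∈ (x : Sym2 V), v ∈ U then g x else 0) := by
        rw [rowSum]
        exact (Finset.sum_subset (Finset.subset_univ _) hvanish).symm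
      rw [hsum, Finset.sum_pair hEne,
        if_pos ((hedgeU i).mpr (Or.inl rfl)), if_pos ((hedgeU i').mpr (Or.inr rfl)),
        hgE i, hgE i', hi'v, pow_succ]
      ring
    · intro h
      constructor
      · rintro ⟨hgh, hall⟩
        obtain ⟨j, hj⟩ := (hsupp h).mp hgh
        have hxE : h = E j := Subtype.ext hj
        rcases (hedgeU j).mp (hxE ▸ hall) with rfl | rfl
        · exact Or.inl hxE
        · exact Or.inr hxE
      · rintro (rfl | rfl)
        · exact ⟨by rw [hgE]; exact pow_ne_zero _ (by norm_num),
            (hedgeU i).mpr (Or.inl rfl)⟩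
        · exact ⟨by rw [hgE]; exact pow_ne_zero _ (by norm_num),
            (hedgeU i').mpr (Or.inr rfl)⟩
  -- propagate y along the cycle
  have h0n : 0 < 2 * m + 1 := by omega
  have hy : ∀ k : ℕ, ∀ hk : k < 2 * m + 1,
      y (E ⟨k, hk⟩) = (-1) ^ k * y (E ⟨0, h0n⟩) := by
    intro k
    induction k with
    | zero => intro hk; simp
    | succ k ih =>
      intro hk
      have hkn : k < 2 * m + 1 := by omega
      have hb := bal ⟨k, hkn⟩ (by simpa using hk)
      have hsucc : cyclicSucc (⟨k, hkn⟩ : Fin (2 * m + 1)) = ⟨k + 1, hk⟩ :=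
        Fin.ext (Nat.mod_eq_of_lt hk)
      have hp := hpair _ _ hb
      rw [hsucc] at hp
      have hik := ih hkn
      rw [pow_succ]
      linarith
  refine ⟨y (E ⟨0, h0n⟩), ?_⟩
  funext e
  by_cases hge : g e = 0
  · have h1 := hysupp e hge
    simp [h1, hge]
  · obtain ⟨j, hj⟩ := (hsupp e).mp hge
    have heE : e = E j := Subtype.ext hj
    have h2 := hy (j : ℕ) j.isLt
    simp only [Pi.smul_apply, smul_eq_mul]
    rw [heE, hgE j]
    have hjeta : (⟨(j : ℕ), j.isLt⟩ : Fin (2 * m + 1)) = j := rfl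
    rw [hjeta] at h2
    rw [h2]
    ring
end

section
/- Let G = (V,E) be a simple graph, v ∈ V, e = uv ∈ E with u of degree 1 in a forest F ⊆ E containing e, and let F_v = {vw ∈ F : w ≠ u}. Then the vector g = −1_e + X(F_v) (value −1 on e, +1 on each edge of F_v, 0 elsewhere) is a circuit of the rank-inequality system (Rank). -/
lemma edge_exists_rep {V : Type*} (G : SimpleGraph V) (a : G.edgeSet) :
    ∃ x z, (a : Sym2 V) = s(x, z) ∧ x ≠ z := by
  obtain ⟨s, hs⟩ := a
  induction s using Sym2.ind with
  | _ x z => exact ⟨x, z, rfl, (G.mem_edgeSet.1 hs).ne⟩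

lemma edge_rep_of_mem {V : Type*} (G : SimpleGraph V) (a : G.edgeSet) (x : V)
    (hx : x ∈ (a : Sym2 V)) : ∃ z, (a : Sym2 V) = s(x, z) ∧ x ≠ z := by
  obtain ⟨z, hz⟩ := Sym2.mem_iff_exists.1 hx
  refine ⟨z, hz, ?_⟩
  have h2 := a.2
  rw [hz, G.mem_edgeSet] at h2
  exact h2.ne

lemma edge_eq_of_subset_pair {V : Type*} [DecidableEq V] (G : SimpleGraph V) (a : G.edgeSet)
    (x z : V) (hcond : ∀ w ∈ (a : Sym2 V), w ∈ ({x, z} : Finset V)) :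
    (a : Sym2 V) = s(x, z) := by
  obtain ⟨p, q, hpq, hne⟩ := edge_exists_rep G a
  rw [hpq] at hcond ⊢
  have hp := hcond p (by simp)
  have hq := hcond q (by simp)
  simp only [Finset.mem_insert, Finset.mem_singleton] at hp hq
  rcases hp with rfl | rfl <;> rcases hq with rfl | rfl
  · exact absurd rfl hne
  · rfl
  · exact Sym2.eq_swap
  · exact absurd rfl hne

lemma rowSum_eq_one {V : Type*} [Fintype V] [DecidableEq V] (G : SimpleGraph V)
    [DecidableRel G.Adj] (y : G.edgeSet → ℝ) (U : Finset V) (a : G.edgeSet)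
    (hca : ∀ x ∈ (a : Sym2 V), x ∈ U)
    (h : ∀ e' : G.edgeSet, (∀ x ∈ (e' : Sym2 V), x ∈ U) → y e' ≠ 0 → e' = a) :
    (∑ e : G.edgeSet, if ∀ w ∈ (e : Sym2 V), w ∈ U then y e else 0) = y a := by
  have key : ∀ e' : G.edgeSet,
      (if ∀ w ∈ (e' : Sym2 V), w ∈ U then y e' else 0) = (if e' = a then y e' else 0) := by
    intro e'
    by_cases h1 : e' = a
    · subst h1; rw [if_pos hca, if_pos rfl]
    · rw [if_neg h1]
      split_ifs with hc
      · by_contra hne; exact h1 (h e' hc hne)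
      · rfl
  simp only [key]
  simp [Finset.sum_ite_eq']

lemma rowSum_eq_two {V : Type*} [Fintype V] [DecidableEq V] (G : SimpleGraph V)
    [DecidableRel G.Adj] (y : G.edgeSet → ℝ) (U : Finset V) (a b : G.edgeSet) (hab : a ≠ b)
    (hca : ∀ x ∈ (a : Sym2 V), x ∈ U) (hcb : ∀ x ∈ (b : Sym2 V), x ∈ U)
    (h : ∀ e' : G.edgeSet, (∀ x ∈ (e' : Sym2 V), x ∈ U) → y e' ≠ 0 → e' = a ∨ e' = b) :
    (∑ e : G.edgeSet, if ∀ w ∈ (e : Sym2 V), w ∈ U then y e else 0) = y a + y b := by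
  have key : ∀ e' : G.edgeSet,
      (if ∀ w ∈ (e' : Sym2 V), w ∈ U then y e' else 0)
        = (if e' = a then y e' else 0) + (if e' = b then y e' else 0) := by
    intro e'
    by_cases h1 : e' = a
    · subst h1; rw [if_pos hca, if_pos rfl, if_neg hab, add_zero]
    by_cases h2 : e' = b
    · subst h2; rw [if_pos hcb, if_neg h1, if_pos rfl, zero_add]
    · rw [if_neg h1, if_neg h2, add_zero]
      split_ifs with hc
      · by_contra hne
        rcases h e' hc hne with rfl | rfl
        · exact h1 rfl
        · exact h2 rfl
      · rfl
  simp only [key]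
  rw [Finset.sum_add_distrib]
  simp [Finset.sum_ite_eq']

/-- The star-plus-opposite-edge vector: given a forest `F`, an edge `e = uv` of `F`
whose endpoint `u` is a leaf of `F`, the vector with value `-1` on `e`, value `1` on
every other edge of `F` containing `v`, and `0` elsewhere, is a circuit of the
rank-inequality system. -/
theorem stmt16 {V : Type*} [Fintype V] [DecidableEq V] (G : SimpleGraph V)
    [DecidableRel G.Adj] (F : Finset G.edgeSet)
    (hforest : (edgeSub G (↑F : Set G.edgeSet)).IsAcyclic)
    (e : G.edgeSet) (heF : e ∈ F) (u v : V)
    (he : (e : Sym2 V) = s(u, v))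
    (hleaf : ∀ f ∈ F, u ∈ (f : Sym2 V) → f = e) :
    IsCircuit G (fun f => if f = e then (-1 : ℝ)
      else if f ∈ F ∧ v ∈ (f : Sym2 V) then 1 else 0) := by

  set g : G.edgeSet → ℝ := fun f => if f = e then (-1 : ℝ)
      else if f ∈ F ∧ v ∈ (f : Sym2 V) then 1 else 0 with hgdef
  have hge : g e = -1 := by simp [hgdef]
  have hgf : ∀ f : G.edgeSet, f ≠ e → f ∈ F → v ∈ (f : Sym2 V) → g f = 1 := by
    intro f h1 h2 h3; simp [hgdef, h1, h2, h3]
  have hg0 : ∀ f : G.edgeSet, f ≠ e → ¬(f ∈ F ∧ v ∈ (f : Sym2 V)) → g f = 0 := by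
    intro f h1 h2; simp [hgdef, h1, h2]
  constructor
  · intro h
    have := congrFun h e
    rw [hge, Pi.zero_apply] at this
    norm_num at this
  intro y hy hss
  have hsub : Bsupp G y ⊆ Bsupp G g := hss.subset
  have hnsub : ¬ Bsupp G g ⊆ Bsupp G y := hss.not_subset
  have huv : u ≠ v := by
    have h2 := e.2
    rw [he, G.mem_edgeSet] at h2
    exact h2.ne
  -- Step B : supp y ⊆ supp g
  have hsupp : ∀ a : G.edgeSet, g a = 0 → y a = 0 := by
    intro a hga
    obtain ⟨x, z, hrep, hxz⟩ := edge_exists_rep G a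
    have hca : ∀ w ∈ (a : Sym2 V), w ∈ ({x, z} : Finset V) := by
      rw [hrep]; intro w hw
      rcases Sym2.mem_iff.1 hw with rfl | rfl <;> simp
    have hone : ∀ e' : G.edgeSet, (∀ w ∈ (e' : Sym2 V), w ∈ ({x, z} : Finset V)) →
        e' = a := by
      intro e' hc
      exact Subtype.ext ((edge_eq_of_subset_pair G e' x z hc).trans hrep.symm)
    have hrowy : rowSum G y {x, z} = y a :=
      rowSum_eq_one G y {x, z} a hca (fun e' hc _ => hone e' hc)
    have hrowg : rowSum G g {x, z} = g a :=
      rowSum_eq_one G g {x, z} a hca (fun e' hc _ => hone e' hc)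
    have hng : ({x, z} : Finset V) ∉ Bsupp G g := by
      intro hm; exact hm.2 (by rw [hrowg, hga])
    by_contra hne
    exact hng (hsub ⟨⟨x, by simp⟩, by rw [hrowy]; exact hne⟩)
  -- Step C : y f = - y e for f ∈ F_v
  have hyf : ∀ f : G.edgeSet, f ∈ F → v ∈ (f : Sym2 V) → f ≠ e → y f = - y e := by
    intro f hfF hfv hfe
    obtain ⟨w, hw, hvw⟩ := edge_rep_of_mem G f v hfv
    have hwu : w ≠ u := by
      rintro rfl
      exact hfe (hleaf f hfF (by rw [hw]; simp))
    have hce : ∀ x ∈ (e : Sym2 V), x ∈ ({u, v, w} : Finset V) := by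
      rw [he]; intro x hx
      rcases Sym2.mem_iff.1 hx with rfl | rfl <;> simp
    have hcf : ∀ x ∈ (f : Sym2 V), x ∈ ({u, v, w} : Finset V) := by
      rw [hw]; intro x hx
      rcases Sym2.mem_iff.1 hx with rfl | rfl <;> simp
    have hclass : ∀ (q : G.edgeSet → ℝ), (∀ a : G.edgeSet, g a = 0 → q a = 0) →
        ∀ e' : G.edgeSet, (∀ x ∈ (e' : Sym2 V), x ∈ ({u, v, w} : Finset V)) →
          q e' ≠ 0 → e' = e ∨ e' = f := by
      intro q hq e' hc hne
      have hgne : g e' ≠ 0 := fun h0 => hne (hq e' h0)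
      by_cases h1 : e' = e
      · exact Or.inl h1
      have h2 : e' ∈ F ∧ v ∈ (e' : Sym2 V) := by
        by_contra h2
        exact hgne (hg0 e' h1 h2)
      obtain ⟨z, hz, hvz⟩ := edge_rep_of_mem G e' v h2.2
      have hzU : z ∈ ({u, v, w} : Finset V) := hc z (by rw [hz]; simp)
      simp only [Finset.mem_insert, Finset.mem_singleton] at hzU
      rcases hzU with rfl | rfl | rfl
      · exact Or.inl (Subtype.ext (hz.trans (Sym2.eq_swap.trans he.symm)))
      · exact absurd rfl hvz
      · exact Or.inr (Subtype.ext (hz.trans hw.symm))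
    have hef : e ≠ f := fun h => hfe h.symm
    have hrowg : rowSum G g {u, v, w} = g e + g f :=
      rowSum_eq_two G g {u, v, w} e f hef hce hcf (hclass g (fun _ h => h))
    have hrowy : rowSum G y {u, v, w} = y e + y f :=
      rowSum_eq_two G y {u, v, w} e f hef hce hcf (hclass y hsupp)
    have hng : ({u, v, w} : Finset V) ∉ Bsupp G g := by
      intro hm
      exact hm.2 (by rw [hrowg, hge, hgf f hfe hfF hfv]; ring)
    have h0 : y e + y f = 0 := by
      by_contra h0
      exact hng (hsub ⟨⟨u, by simp⟩, by rw [hrowy]; exact h0⟩)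
    linarith
  -- Step D
  by_cases hye : y e = 0
  · apply hy
    funext a
    simp only [Pi.zero_apply]
    by_cases h1 : a = e
    · subst h1; exact hye
    by_cases h2 : a ∈ F ∧ v ∈ (a : Sym2 V)
    · rw [hyf a h2.1 h2.2 h1, hye, neg_zero]
    · exact hsupp a (hg0 a h1 h2)
  · have hkey : ∀ a : G.edgeSet, y a = (- y e) * g a := by
      intro a
      by_cases h1 : a = e
      · subst h1; rw [hge]; ring
      by_cases h2 : a ∈ F ∧ v ∈ (a : Sym2 V)
      · rw [hgf a h1 h2.1 h2.2, hyf a h2.1 h2.2 h1]; ring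
      · rw [hsupp a (hg0 a h1 h2), hg0 a h1 h2]; ring
    have hrows : ∀ U : Finset V, rowSum G y U = (- y e) * rowSum G g U := by
      intro U
      rw [rowSum, rowSum, Finset.mul_sum]
      refine Finset.sum_congr rfl fun a _ => ?_
      split_ifs with hc
      · exact hkey a
      · ring
    apply hnsub
    intro U hU
    refine ⟨hU.1, ?_⟩
    rw [hrows U]
    exact mul_ne_zero (neg_ne_zero.2 hye) hU.2
end
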